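/- Four-completion characterization for the three-candidate cup with partial votes: over candidates {A,B,C}, fix a family of declared voters with positive integer weights and fixed votes, together with undeclared voters with positive integer weights whose votes are completely unknown; assume the total weight is odd. Consider the cup rule with agenda ((A vs B), then C). Then: A is the cup winner in some assignment of votes to the undeclared voters if and only if A is the cup winner when every undeclared voter votes A>B>C; B is the cup winner in some assignment if and only if B is the cup winner when every undeclared voter votes B>A>C; and C is the cup winner in some assignment if and only if C is the cup winner when every undeclared voter votes C>A>B or C is the cup winner when every undeclared voter votes C>B>A. Consequently, the cup winner is the same in all assignments if and only if the same candidate wins in these four specific assignments. -/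

import Mathlib

/-!
Coarse elicitation for the 3-candidate cup with agenda ((A vs B), then C):
with declared voters fixed and undeclared voters free, each candidate is a
possible winner iff it wins under one (or, for C, one of two) canonical
assignments of votes to the undeclared voters; consequently the winner is
the same under all assignments iff the same candidate wins under the four
canonical assignments.
-/

namespace Stmt12

inductive Cand where
  | A | B | C
deriving DecidableEq

open Cand

/-- `above l x y` : in the vote given by list `l` (best candidate first),
`x` is ranked above `y`. -/
def above (l : List Cand) (x y : Cand) : Prop := l.idxOf x < l.idxOf y

instance (l : List Cand) (x y : Cand) : Decidable (above l x y) :=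
  inferInstanceAs (Decidable (_ < _))

/-- Total weight of voters ranking `x` above `y`: declared voters vote `P`,
undeclared voters vote `Q`. -/
def N {V₁ V₂ : Type*} [Fintype V₁] [Fintype V₂]
    (w₁ : V₁ → ℕ) (P : V₁ → List Cand) (w₂ : V₂ → ℕ) (Q : V₂ → List Cand)
    (x y : Cand) : ℕ :=
  (∑ v, if above (P v) x y then w₁ v else 0)
  + ∑ v, if above (Q v) x y then w₂ v else 0

/-- Winner of the cup with agenda ((A vs B), then C). -/
def cupWinner (N : Cand → Cand → ℕ) : Cand :=
  let w1 := if N A B > N B A then A else B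
  if N w1 C > N C w1 then w1 else C

lemma above_total {l : List Cand} (h : l.Perm [A,B,C]) (x y : Cand) (hxy : x ≠ y) :
    above l x y ∨ above l y x := by
  have h3 : l.length = 3 := h.length_eq
  rcases l with _|⟨a,_|⟨b,_|⟨c,_|⟨d,t⟩⟩⟩⟩ <;> simp at h3
  revert hxy h
  cases a <;> cases b <;> cases c <;> cases x <;> cases y <;> decide

lemma above_asymm {l : List Cand} {x y : Cand} (h : above l x y) : ¬ above l y x :=
  fun h' => absurd h (Nat.lt_asymm h')

lemma sum_pair {V : Type*} [Fintype V] (w : V → ℕ) (R : V → List Cand)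
    (hR : ∀ v, (R v).Perm [A,B,C]) {x y : Cand} (hxy : x ≠ y) :
    (∑ v, if above (R v) x y then w v else 0)
      + (∑ v, if above (R v) y x then w v else 0) = ∑ v, w v := by
  rw [← Finset.sum_add_distrib]
  refine Finset.sum_congr rfl fun v _ => ?_
  rcases above_total (hR v) x y hxy with h | h
  · rw [if_pos h, if_neg (above_asymm h)]; omega
  · rw [if_neg (above_asymm h), if_pos h]; omega

lemma N_add {V₁ V₂ : Type*} [Fintype V₁] [Fintype V₂]
    (w₁ : V₁ → ℕ) (w₂ : V₂ → ℕ) (P : V₁ → List Cand) (hP : ∀ v, (P v).Perm [A,B,C])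
    (Q : V₂ → List Cand) (hQ : ∀ v, (Q v).Perm [A,B,C]) {x y : Cand} (hxy : x ≠ y) :
    N w₁ P w₂ Q x y + N w₁ P w₂ Q y x = ∑ v, w₁ v + ∑ v, w₂ v := by
  unfold N
  have h1 := sum_pair w₁ P hP hxy
  have h2 := sum_pair w₂ Q hQ hxy
  omega

lemma N_mono {V₁ V₂ : Type*} [Fintype V₁] [Fintype V₂]
    (w₁ : V₁ → ℕ) (w₂ : V₂ → ℕ) (P : V₁ → List Cand)
    (Q Q' : V₂ → List Cand) {x y : Cand}
    (h : ∀ v, above (Q v) x y → above (Q' v) x y) :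
    N w₁ P w₂ Q x y ≤ N w₁ P w₂ Q' x y := by
  unfold N
  have : (∑ v, if above (Q v) x y then w₂ v else 0)
      ≤ ∑ v, if above (Q' v) x y then w₂ v else 0 := by
    refine Finset.sum_le_sum fun v _ => ?_
    by_cases hv : above (Q v) x y
    · rw [if_pos hv, if_pos (h v hv)]
    · simp [hv]
  omega

lemma cupWinner_eq_A_iff (M : Cand → Cand → ℕ) :
    cupWinner M = A ↔ M B A < M A B ∧ M C A < M A C := by
  unfold cupWinner
  by_cases h1 : M B A < M A B <;> simp [h1] <;> split_ifs <;> simp_all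

lemma cupWinner_eq_B_iff (M : Cand → Cand → ℕ) :
    cupWinner M = B ↔ ¬ M B A < M A B ∧ M C B < M B C := by
  unfold cupWinner
  by_cases h1 : M B A < M A B <;> simp [h1] <;> split_ifs <;> simp_all

lemma cupWinner_eq_C_iff (M : Cand → Cand → ℕ) :
    cupWinner M = C ↔ (M B A < M A B ∧ ¬ M C A < M A C) ∨ (¬ M B A < M A B ∧ ¬ M C B < M B C) := by
  unfold cupWinner
  by_cases h1 : M B A < M A B <;> simp [h1] <;> split_ifs <;> simp_all


theorem coarse_elicitation_four_completions {V₁ V₂ : Type*} [Fintype V₁] [Fintype V₂]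
    (w₁ : V₁ → ℕ) (hw₁ : ∀ v, 0 < w₁ v)
    (w₂ : V₂ → ℕ) (hw₂ : ∀ v, 0 < w₂ v)
    (P : V₁ → List Cand) (hP : ∀ v, (P v).Perm [A, B, C])
    (hodd : Odd (∑ v, w₁ v + ∑ v, w₂ v)) :
    ((∃ Q : V₂ → List Cand, (∀ v, (Q v).Perm [A, B, C]) ∧
        cupWinner (N w₁ P w₂ Q) = A)
      ↔ cupWinner (N w₁ P w₂ (fun _ => [A, B, C])) = A)
    ∧
    ((∃ Q : V₂ → List Cand, (∀ v, (Q v).Perm [A, B, C]) ∧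
        cupWinner (N w₁ P w₂ Q) = B)
      ↔ cupWinner (N w₁ P w₂ (fun _ => [B, A, C])) = B)
    ∧
    ((∃ Q : V₂ → List Cand, (∀ v, (Q v).Perm [A, B, C]) ∧
        cupWinner (N w₁ P w₂ Q) = C)
      ↔ (cupWinner (N w₁ P w₂ (fun _ => [C, A, B])) = C ∨
         cupWinner (N w₁ P w₂ (fun _ => [C, B, A])) = C))
    ∧
    ((∀ Q Q' : V₂ → List Cand,
        (∀ v, (Q v).Perm [A, B, C]) → (∀ v, (Q' v).Perm [A, B, C]) →
        cupWinner (N w₁ P w₂ Q) = cupWinner (N w₁ P w₂ Q'))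
      ↔ (cupWinner (N w₁ P w₂ (fun _ => [A, B, C])) =
           cupWinner (N w₁ P w₂ (fun _ => [B, A, C])) ∧
         cupWinner (N w₁ P w₂ (fun _ => [B, A, C])) =
           cupWinner (N w₁ P w₂ (fun _ => [C, A, B])) ∧
         cupWinner (N w₁ P w₂ (fun _ => [C, A, B])) =
           cupWinner (N w₁ P w₂ (fun _ => [C, B, A])))) := by
  -- canonical assignments
  set QA : V₂ → List Cand := fun _ => [A, B, C] with hQA
  set QB : V₂ → List Cand := fun _ => [B, A, C] with hQB
  set QCA : V₂ → List Cand := fun _ => [C, A, B] with hQCA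
  set QCB : V₂ → List Cand := fun _ => [C, B, A] with hQCB
  have hvQA : ∀ v, (QA v).Perm [A, B, C] := fun _ => List.Perm.refl _
  have hvQB : ∀ v, (QB v).Perm [A, B, C] := fun _ => show ([B,A,C] : List Cand).Perm [A,B,C] by decide
  have hvQCA : ∀ v, (QCA v).Perm [A, B, C] := fun _ => show ([C,A,B] : List Cand).Perm [A,B,C] by decide
  have hvQCB : ∀ v, (QCB v).Perm [A, B, C] := fun _ => show ([C,B,A] : List Cand).Perm [A,B,C] by decide
  obtain ⟨k, hk⟩ := hodd
  -- transfer of strict pairwise victories under monotone change of undeclared votes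
  have transfer : ∀ (Q Q' : V₂ → List Cand), (∀ v, (Q v).Perm [A, B, C]) →
      (∀ v, (Q' v).Perm [A, B, C]) → ∀ x y : Cand, x ≠ y →
      (∀ v, above (Q v) x y → above (Q' v) x y) →
      N w₁ P w₂ Q y x < N w₁ P w₂ Q x y → N w₁ P w₂ Q' y x < N w₁ P w₂ Q' x y := by
    intro Q Q' hQ hQ' x y hxy hm h
    have h1 := N_add w₁ w₂ P hP Q hQ hxy
    have h2 := N_add w₁ w₂ P hP Q' hQ' hxy
    have h3 := N_mono w₁ w₂ P Q Q' hm
    omega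
  -- from "not strictly beaten" to "strictly beats", using oddness
  have notlt : ∀ (Q : V₂ → List Cand), (∀ v, (Q v).Perm [A, B, C]) →
      ∀ x y : Cand, x ≠ y →
      ¬ N w₁ P w₂ Q y x < N w₁ P w₂ Q x y → N w₁ P w₂ Q x y < N w₁ P w₂ Q y x := by
    intro Q hQ x y hxy h
    have h1 := N_add w₁ w₂ P hP Q hQ hxy
    omega
  have hAB : (A : Cand) ≠ B := by decide
  have hBA : (B : Cand) ≠ A := by decide
  have hAC : (A : Cand) ≠ C := by decide
  have hCA : (C : Cand) ≠ A := by decide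
  have hBC : (B : Cand) ≠ C := by decide
  have hCB : (C : Cand) ≠ B := by decide
  -- main implications
  have mainA : ∀ Q : V₂ → List Cand, (∀ v, (Q v).Perm [A, B, C]) →
      cupWinner (N w₁ P w₂ Q) = A → cupWinner (N w₁ P w₂ QA) = A := by
    intro Q hQ h
    rw [cupWinner_eq_A_iff] at h ⊢
    exact ⟨transfer Q QA hQ hvQA A B hAB (fun v _ => show above [A,B,C] A B by decide) h.1,
           transfer Q QA hQ hvQA A C hAC (fun v _ => show above [A,B,C] A C by decide) h.2⟩
  have mainB : ∀ Q : V₂ → List Cand, (∀ v, (Q v).Perm [A, B, C]) →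
      cupWinner (N w₁ P w₂ Q) = B → cupWinner (N w₁ P w₂ QB) = B := by
    intro Q hQ h
    rw [cupWinner_eq_B_iff] at h ⊢
    obtain ⟨h1, h2⟩ := h
    have h1' := notlt Q hQ A B hAB h1
    have h1'' := transfer Q QB hQ hvQB B A hBA (fun v _ => show above [B,A,C] B A by decide) h1'
    exact ⟨by omega, transfer Q QB hQ hvQB B C hBC (fun v _ => show above [B,A,C] B C by decide) h2⟩
  have mainC : ∀ Q : V₂ → List Cand, (∀ v, (Q v).Perm [A, B, C]) →
      cupWinner (N w₁ P w₂ Q) = C →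
      cupWinner (N w₁ P w₂ QCA) = C ∨ cupWinner (N w₁ P w₂ QCB) = C := by
    intro Q hQ h
    rw [cupWinner_eq_C_iff] at h
    rcases h with ⟨h1, h2⟩ | ⟨h1, h2⟩
    · left
      rw [cupWinner_eq_C_iff]
      left
      have h2' := notlt Q hQ A C hAC h2
      have hca := transfer Q QCA hQ hvQCA C A hCA (fun v _ => show above [C,A,B] C A by decide) h2'
      have hab := transfer Q QCA hQ hvQCA A B hAB (fun v _ => show above [C,A,B] A B by decide) h1
      exact ⟨hab, by omega⟩
    · right
      rw [cupWinner_eq_C_iff]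
      right
      have h1' := notlt Q hQ A B hAB h1
      have h2' := notlt Q hQ B C hBC h2
      have hba := transfer Q QCB hQ hvQCB B A hBA (fun v _ => show above [C,B,A] B A by decide) h1'
      have hcb := transfer Q QCB hQ hvQCB C B hCB (fun v _ => show above [C,B,A] C B by decide) h2'
      exact ⟨by omega, by omega⟩
  have iffA : (∃ Q : V₂ → List Cand, (∀ v, (Q v).Perm [A, B, C]) ∧
      cupWinner (N w₁ P w₂ Q) = A) ↔ cupWinner (N w₁ P w₂ QA) = A :=
    ⟨fun ⟨Q, hQ, h⟩ => mainA Q hQ h, fun h => ⟨QA, hvQA, h⟩⟩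
  have iffB : (∃ Q : V₂ → List Cand, (∀ v, (Q v).Perm [A, B, C]) ∧
      cupWinner (N w₁ P w₂ Q) = B) ↔ cupWinner (N w₁ P w₂ QB) = B :=
    ⟨fun ⟨Q, hQ, h⟩ => mainB Q hQ h, fun h => ⟨QB, hvQB, h⟩⟩
  have iffC : (∃ Q : V₂ → List Cand, (∀ v, (Q v).Perm [A, B, C]) ∧
      cupWinner (N w₁ P w₂ Q) = C) ↔
      (cupWinner (N w₁ P w₂ QCA) = C ∨ cupWinner (N w₁ P w₂ QCB) = C) :=
    ⟨fun ⟨Q, hQ, h⟩ => mainC Q hQ h,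
     fun h => h.elim (fun h => ⟨QCA, hvQCA, h⟩) (fun h => ⟨QCB, hvQCB, h⟩)⟩
  refine ⟨iffA, iffB, iffC, ?_, ?_⟩
  · intro hall
    exact ⟨hall QA QB hvQA hvQB, hall QB QCA hvQB hvQCA, hall QCA QCB hvQCA hvQCB⟩
  · rintro ⟨e1, e2, e3⟩
    have key : ∀ Q : V₂ → List Cand, (∀ v, (Q v).Perm [A, B, C]) →
        cupWinner (N w₁ P w₂ Q) = cupWinner (N w₁ P w₂ QA) := by
      intro Q hQ
      rcases hc : cupWinner (N w₁ P w₂ Q) with _ | _ | _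
      · exact (mainA Q hQ hc).symm
      · rw [e1]; exact (mainB Q hQ hc).symm
      · rcases mainC Q hQ hc with h | h
        · rw [e1, e2]; exact h.symm
        · rw [e1, e2, e3]; exact h.symm
    intro Q Q' hQ hQ'
    rw [key Q hQ, key Q' hQ']

end Stmt12
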